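/- Let R be a commutative ring, N an R-module, and M = N ⊕ R·e where R·e is a free rank-one direct summand with generator e. Equip ⋀^• M with the filtration P_k(⋀^i M) := image of ⋀^k M ⊗ ⋀^{i−k} N → ⋀^i M. Then the map ⋀^{i−1} N → P_1(⋀^i M)/P_0(⋀^i M) sending ω to the class of e ∧ ω is an isomorphism of R-modules. -/

import Mathlib

set_option maxHeartbeats 1600000


/-- The preweight filtration `P` on the `i`-th exterior power of `M` with respect to a
submodule `N ⊆ M`, realized inside the exterior algebra. -/
noncomputable def preweightFiltration (R : Type*) [CommRing R] {M : Type*} [AddCommGroup M]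
    [Module R M] (N : Submodule R M) (i : ℕ) (k : ℤ) :
    Submodule R (ExteriorAlgebra R M) :=
  if k < 0 then ⊥
  else Submodule.span R
    {x | ∃ m : Fin i → M, (∀ j : Fin i, k ≤ ((j : ℕ) : ℤ) → m j ∈ N) ∧
      ExteriorAlgebra.ιMulti R i m = x}

/-- The wedge `m₀ ∧ ⋯ ∧ m_{n-1}` as an element of the `n`-th exterior power. -/
noncomputable def wedgeEl (R : Type*) [CommRing R] {M : Type*} [AddCommGroup M] [Module R M]
    (n : ℕ) (m : Fin n → M) : ↥(⋀[R]^n M) :=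
  ⟨ExteriorAlgebra.ιMulti R n m,
    ExteriorAlgebra.ιMulti_range R n (Set.mem_range_self m)⟩

section Aux

variable (R : Type*) [CommRing R] (N : Type*) [AddCommGroup N] [Module R N]

/-- Left contraction by the second projection. -/
noncomputable def resContract : ExteriorAlgebra R (N × R) →ₗ[R] ExteriorAlgebra R (N × R) :=
  CliffordAlgebra.contractLeft (LinearMap.snd R N R)

lemma resContract_ι_mul (a : N × R) (b : ExteriorAlgebra R (N × R)) :
    resContract R N (ExteriorAlgebra.ι R a * b)
      = a.2 • b - ExteriorAlgebra.ι R a * resContract R N b :=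
  CliffordAlgebra.contractLeft_ι_mul _ a b

lemma ιMulti_cons {M : Type*} [AddCommGroup M] [Module R M] {k : ℕ} (x : M) (v : Fin k → M) :
    ExteriorAlgebra.ιMulti R (k + 1) (Fin.cons x v)
      = ExteriorAlgebra.ι R x * ExteriorAlgebra.ιMulti R k v := by
  rw [ExteriorAlgebra.ιMulti_succ_apply]
  congr 1

lemma resContract_ιMulti_zero {k : ℕ} (v : Fin k → N × R) (hv : ∀ j, (v j).2 = 0) :
    resContract R N (ExteriorAlgebra.ιMulti R k v) = 0 := by
  induction k with
  | zero =>
      rw [ExteriorAlgebra.ιMulti_zero_apply]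
      exact CliffordAlgebra.contractLeft_one _ _
  | succ k ih =>
      rw [← Fin.cons_self_tail v, ιMulti_cons, resContract_ι_mul,
        ih (Fin.tail v) (fun j => hv j.succ), mul_zero, sub_zero, hv 0, zero_smul]

lemma resContract_ιMulti_succ {k : ℕ} (m : Fin (k + 1) → N × R)
    (hm : ∀ j : Fin k, (m j.succ).2 = 0) :
    resContract R N (ExteriorAlgebra.ιMulti R (k + 1) m)
      = (m 0).2 • ExteriorAlgebra.ιMulti R k (Fin.tail m) := by
  conv_lhs => rw [← Fin.cons_self_tail m]
  rw [ιMulti_cons, resContract_ι_mul,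
    resContract_ιMulti_zero R N (Fin.tail m) (fun j => hm j), mul_zero, sub_zero]

lemma mem_range_inl_iff (x : N × R) :
    x ∈ LinearMap.range (LinearMap.inl R N R) ↔ x.2 = 0 := by
  constructor
  · rintro ⟨a, rfl⟩; rfl
  · intro h; exact ⟨x.1, Prod.ext rfl h.symm⟩

end Aux

/-- For `M = N ⊕ R·e` with `e = (0,1)` and `i = n+1 ≥ 1`, the map
`⋀^{i-1} N → P_1(⋀^i M)/P_0(⋀^i M)`, `ω ↦ [e ∧ ω]`, is an isomorphism. -/
theorem residue_iso_rank_one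
    (R : Type*) [CommRing R] (N : Type*) [AddCommGroup N] [Module R N] (n : ℕ) :
    ∃ φ : ↥(⋀[R]^n N) ≃ₗ[R]
        (↥(preweightFiltration R (LinearMap.range (LinearMap.inl R N R)) (n + 1) 1) ⧸
          Submodule.comap
            (preweightFiltration R (LinearMap.range (LinearMap.inl R N R)) (n + 1) 1).subtype
            (preweightFiltration R (LinearMap.range (LinearMap.inl R N R)) (n + 1) 0)),
      ∀ (m : Fin n → N)
        (h : ExteriorAlgebra.ιMulti R (n + 1)
            (Fin.cons ((0, 1) : N × R) fun j => ((m j, 0) : N × R)) ∈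
            preweightFiltration R (LinearMap.range (LinearMap.inl R N R)) (n + 1) 1),
        φ (wedgeEl R n m) = Submodule.Quotient.mk ⟨_, h⟩ := by
  classical
  set N' : Submodule R (N × R) := LinearMap.range (LinearMap.inl R N R) with hN'
  set P1 : Submodule R (ExteriorAlgebra R (N × R)) := preweightFiltration R N' (n + 1) 1 with hP1def
  set P0 : Submodule R (ExteriorAlgebra R (N × R)) := preweightFiltration R N' (n + 1) 0 with hP0def
  set Q : Submodule R ↥P1 := Submodule.comap P1.subtype P0 with hQdef
  set e : N × R := ((0, 1) : N × R) with he
  -- unfold the filtration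
  have hP1 : P1 = Submodule.span R
      {x | ∃ m : Fin (n + 1) → N × R, (∀ j : Fin (n + 1), 1 ≤ ((j : ℕ) : ℤ) → m j ∈ N') ∧
        ExteriorAlgebra.ιMulti R (n + 1) m = x} := by
    rw [hP1def, preweightFiltration, if_neg (by norm_num)]
  have hP0 : P0 = Submodule.span R
      {x | ∃ m : Fin (n + 1) → N × R, (∀ j : Fin (n + 1), 0 ≤ ((j : ℕ) : ℤ) → m j ∈ N') ∧
        ExteriorAlgebra.ιMulti R (n + 1) m = x} := by
    rw [hP0def, preweightFiltration, if_neg (by norm_num)]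
  -- the forward raw map
  set F : ExteriorAlgebra R N →ₗ[R] ExteriorAlgebra R (N × R) :=
    LinearMap.mulLeft R (ExteriorAlgebra.ι R e) ∘ₗ
      (ExteriorAlgebra.map (LinearMap.inl R N R)).toLinearMap with hF
  have hFapply : ∀ (m : Fin n → N),
      F (ExteriorAlgebra.ιMulti R n m)
        = ExteriorAlgebra.ιMulti R (n + 1) (Fin.cons e (LinearMap.inl R N R ∘ m)) := by
    intro m
    rw [ιMulti_cons]
    simp [hF, ExteriorAlgebra.map_apply_ιMulti]
  -- F maps ⋀^n N into P1
  have hFmem : ∀ x ∈ ⋀[R]^n N, F x ∈ P1 := by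
    intro x hx
    rw [← ExteriorAlgebra.ιMulti_span_fixedDegree] at hx
    have : Submodule.span R (Set.range (ExteriorAlgebra.ιMulti R n (M := N)))
        ≤ Submodule.comap F P1 := by
      rw [Submodule.span_le]
      rintro _ ⟨m, rfl⟩
      simp only [Set.mem_preimage, SetLike.mem_coe, Submodule.mem_comap]
      rw [hFapply, hP1]
      refine Submodule.subset_span ⟨Fin.cons e (LinearMap.inl R N R ∘ m), ?_, rfl⟩
      intro j hj
      induction j using Fin.cases with
      | zero => simp at hj
      | succ i => simp only [Fin.cons_succ]; exact ⟨m i, rfl⟩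
    exact this hx
  -- the backward raw map
  set g0 : ExteriorAlgebra R (N × R) →ₗ[R] ExteriorAlgebra R N :=
    (ExteriorAlgebra.map (LinearMap.fst R N R)).toLinearMap ∘ₗ resContract R N with hg0
  -- contraction kills P0
  have hcP0 : ∀ x ∈ P0, resContract R N x = 0 := by
    intro x hx
    rw [hP0] at hx
    have : Submodule.span R
        {x | ∃ m : Fin (n + 1) → N × R, (∀ j : Fin (n + 1), 0 ≤ ((j : ℕ) : ℤ) → m j ∈ N') ∧
          ExteriorAlgebra.ιMulti R (n + 1) m = x} ≤ LinearMap.ker (resContract R N) := by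
      rw [Submodule.span_le]
      rintro _ ⟨m, hm, rfl⟩
      simp only [SetLike.mem_coe, LinearMap.mem_ker]
      exact resContract_ιMulti_zero R N m
        (fun j => (mem_range_inl_iff R N _).1 (hm j (by positivity)))
    exact this hx
  -- the contraction of a P1 generator
  have hckey : ∀ (m : Fin (n + 1) → N × R),
      (∀ j : Fin (n + 1), 1 ≤ ((j : ℕ) : ℤ) → m j ∈ N') →
      resContract R N (ExteriorAlgebra.ιMulti R (n + 1) m)
        = (m 0).2 • ExteriorAlgebra.ιMulti R n (Fin.tail m) := by
    intro m hm
    refine resContract_ιMulti_succ R N m (fun j => (mem_range_inl_iff R N _).1 ?_)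
    exact hm j.succ (by simp)
  have hg0apply : ∀ (m : Fin (n + 1) → N × R),
      (∀ j : Fin (n + 1), 1 ≤ ((j : ℕ) : ℤ) → m j ∈ N') →
      g0 (ExteriorAlgebra.ιMulti R (n + 1) m)
        = (m 0).2 • ExteriorAlgebra.ιMulti R n (LinearMap.fst R N R ∘ Fin.tail m) := by
    intro m hm
    simp only [hg0, LinearMap.comp_apply]
    rw [hckey m hm, map_smul, AlgHom.toLinearMap_apply, ExteriorAlgebra.map_apply_ιMulti]
  -- g0 maps P1 into ⋀^n N
  have hg0mem : ∀ x ∈ P1, g0 x ∈ ⋀[R]^n N := by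
    intro x hx
    rw [hP1] at hx
    have : Submodule.span R
        {x | ∃ m : Fin (n + 1) → N × R, (∀ j : Fin (n + 1), 1 ≤ ((j : ℕ) : ℤ) → m j ∈ N') ∧
          ExteriorAlgebra.ιMulti R (n + 1) m = x} ≤ Submodule.comap g0 (⋀[R]^n N) := by
      rw [Submodule.span_le]
      rintro _ ⟨m, hm, rfl⟩
      simp only [SetLike.mem_coe, Submodule.mem_comap]
      rw [hg0apply m hm]
      exact Submodule.smul_mem _ _
        (ExteriorAlgebra.ιMulti_range R n (Set.mem_range_self _))
    exact this hx
  -- F ∘ g0 = id mod P0 on P1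
  have hsection : ∀ x ∈ P1, F (g0 x) - x ∈ P0 := by
    intro x hx
    rw [hP1] at hx
    have : Submodule.span R
        {x | ∃ m : Fin (n + 1) → N × R, (∀ j : Fin (n + 1), 1 ≤ ((j : ℕ) : ℤ) → m j ∈ N') ∧
          ExteriorAlgebra.ιMulti R (n + 1) m = x}
        ≤ Submodule.comap (F ∘ₗ g0 - LinearMap.id) P0 := by
      rw [Submodule.span_le]
      rintro _ ⟨m, hm, rfl⟩
      simp only [SetLike.mem_coe, Submodule.mem_comap, LinearMap.sub_apply, LinearMap.comp_apply,
        LinearMap.id_apply]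
      have htail : ∀ j : Fin n, Fin.tail m j ∈ N' := fun j => hm j.succ (by simp)
      -- compute g0
      rw [hg0apply m hm, map_smul, hFapply]
      have htail' : (LinearMap.inl R N R ∘ (LinearMap.fst R N R ∘ Fin.tail m)) = Fin.tail m := by
        funext j
        have := (mem_range_inl_iff R N _).1 (htail j)
        exact Prod.ext rfl this.symm
      rw [htail', ιMulti_cons]
      -- decompose m 0
      have hm0 : ExteriorAlgebra.ι R (m 0)
          = ExteriorAlgebra.ι R (LinearMap.inl R N R (m 0).1)
            + (m 0).2 • ExteriorAlgebra.ι R e := by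
        rw [← map_smul, ← map_add]
        congr 1
        exact Prod.ext (by simp [he]) (by simp [he])
      have hx0 : ExteriorAlgebra.ιMulti R (n + 1) m
          = ExteriorAlgebra.ι R (m 0) * ExteriorAlgebra.ιMulti R n (Fin.tail m) := by
        conv_lhs => rw [← Fin.cons_self_tail m, ιMulti_cons]
      rw [hx0, hm0, add_mul, smul_mul_assoc, sub_add_eq_sub_sub]
      rw [sub_sub_cancel_left]
      refine Submodule.neg_mem _ ?_
      rw [← ιMulti_cons, hP0]
      refine Submodule.subset_span ⟨Fin.cons (LinearMap.inl R N R (m 0).1) (Fin.tail m), ?_, rfl⟩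
      intro j _
      induction j using Fin.cases with
      | zero => rw [Fin.cons_zero]; exact ⟨(m 0).1, rfl⟩
      | succ i => rw [Fin.cons_succ]; exact htail i
    exact this hx
  -- g0 ∘ F = id on ⋀^n N
  have hretract : ∀ x ∈ ⋀[R]^n N, g0 (F x) = x := by
    intro x hx
    rw [← ExteriorAlgebra.ιMulti_span_fixedDegree] at hx
    refine LinearMap.eqOn_span (f := g0 ∘ₗ F) (g := LinearMap.id) ?_ hx
    rintro _ ⟨m, rfl⟩
    simp only [LinearMap.comp_apply, LinearMap.id_apply]
    rw [hFapply, hg0apply]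
    · have h1 : ((Fin.cons e (⇑(LinearMap.inl R N R) ∘ m) : Fin (n + 1) → N × R) 0).2
          = (1 : R) := by simp [he]
      have h2 : (⇑(LinearMap.fst R N R) ∘
          Fin.tail (Fin.cons e (⇑(LinearMap.inl R N R) ∘ m) : Fin (n + 1) → N × R)) = m := by
        funext j; simp
      rw [h1, h2, one_smul]
    · intro j hj
      induction j using Fin.cases with
      | zero => simp at hj
      | succ i => simp only [Fin.cons_succ]; exact ⟨m i, rfl⟩
  -- package the maps
  set φ0 : ↥(⋀[R]^n N) →ₗ[R] ↥P1 :=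
    LinearMap.codRestrict P1 (F ∘ₗ (⋀[R]^n N).subtype) (fun x => hFmem _ x.2) with hφ0
  set φ : ↥(⋀[R]^n N) →ₗ[R] (↥P1 ⧸ Q) := Q.mkQ ∘ₗ φ0 with hφ
  set g' : ↥P1 →ₗ[R] ↥(⋀[R]^n N) :=
    LinearMap.codRestrict (⋀[R]^n N) (g0 ∘ₗ P1.subtype) (fun x => hg0mem _ x.2) with hg'
  have hker : Q ≤ LinearMap.ker g' := by
    intro x hx
    simp only [LinearMap.mem_ker]
    apply Subtype.ext
    have : resContract R N (x : ExteriorAlgebra R (N × R)) = 0 := hcP0 _ hx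
    simp [hg', hg0, LinearMap.codRestrict, this]
  set ψ : (↥P1 ⧸ Q) →ₗ[R] ↥(⋀[R]^n N) := Q.liftQ g' hker with hψ
  have hψφ : ψ ∘ₗ φ = LinearMap.id := by
    refine LinearMap.ext fun x => Subtype.ext ?_
    show ((g' (φ0 x) : ↥(⋀[R]^n N)) : ExteriorAlgebra R N) = (x : ExteriorAlgebra R N)
    exact hretract _ x.2
  have hφψ : φ ∘ₗ ψ = LinearMap.id := by
    apply Submodule.linearMap_qext
    ext x
    simp only [LinearMap.comp_apply, LinearMap.id_apply, Submodule.mkQ_apply]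
    rw [hψ]
    have : ψ (Submodule.Quotient.mk x) = g' x := by
      rw [hψ]; exact Submodule.liftQ_apply _ _ _
    rw [hφ, LinearMap.comp_apply, this, Submodule.mkQ_apply]
    rw [Submodule.Quotient.eq]
    show (φ0 (g' x) : ↥P1) - x ∈ Q
    have hval : ((φ0 (g' x) - x : ↥P1) : ExteriorAlgebra R (N × R))
        = F (g0 (x : ExteriorAlgebra R (N × R))) - (x : ExteriorAlgebra R (N × R)) := rfl
    rw [hQdef, Submodule.mem_comap]
    rw [show (P1.subtype (φ0 (g' x) - x)) = ((φ0 (g' x) - x : ↥P1) : ExteriorAlgebra R (N × R))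
      from rfl, hval]
    exact hsection _ x.2
  refine ⟨LinearEquiv.ofLinear φ ψ hφψ hψφ, ?_⟩
  intro m h
  have : φ (wedgeEl R n m) = Submodule.Quotient.mk (φ0 (wedgeEl R n m)) := rfl
  rw [LinearEquiv.ofLinear_apply, this]
  congr 1
  apply Subtype.ext
  show F (ExteriorAlgebra.ιMulti R n m) = _
  rw [hFapply]
  have harg : Fin.cons e (LinearMap.inl R N R ∘ m)
      = (Fin.cons ((0, 1) : N × R) (fun j => ((m j, 0) : N × R)) : Fin (n + 1) → N × R) := by
    funext j
    induction j using Fin.cases with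
    | zero => rfl
    | succ i => simp
  rw [harg]
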